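/- (Lemma 1, part (a).) If x⁽²⁾ ≥ x⁽¹⁾ (componentwise storage energies) and all other variables (set-points u, switch statuses δ, disturbance w) are equal, then ρ̃(u, δ, x⁽²⁾, w) ≤ ρ̃(u, δ, x⁽¹⁾, w), where ρ̃ is the largest ρ solving the augmented power balance p̃_tot(u, δ, x, w, ρ) = 0. -/

import Mathlib

noncomputable def sat (a x b : ℝ) : ℝ := max a (min x b)

/-- Augmented total power of the microgrid:
`p̃tot = min(0,ρ−ρmin) + max(0,ρ−ρmax) + 1ᵀp_t + 1ᵀp_s + 1ᵀp_r + 1ᵀw_d`. -/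
noncomputable def ptot (T S R D : ℕ)
    (ρmin ρmax Ts : ℝ)
    (uT χT ptmin ptmax : Fin T → ℝ) (δ : Fin T → Bool)
    (uS χS psmin psmax xmin xmax : Fin S → ℝ)
    (uR χR prmin wr : Fin R → ℝ) (wd : Fin D → ℝ)
    (x : Fin S → ℝ) (ρ : ℝ) : ℝ :=
  min 0 (ρ - ρmin) + max 0 (ρ - ρmax)
    + (∑ i, if δ i then sat (ptmin i) (uT i + χT i * ρ) (ptmax i) else 0)
    + (∑ i, sat (max (psmin i) ((x i - xmax i) / Ts)) (uS i + χS i * ρ)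
          (min (psmax i) ((x i - xmin i) / Ts)))
    + (∑ i, sat (prmin i) (uR i + χR i * ρ) (wr i))
    + (∑ i, wd i)

/-- Lemma 1(a): with non-negative inverse droop gains, if the storage energies satisfy
`x⁽²⁾ ≥ x⁽¹⁾` componentwise and all other variables coincide, then the largest zero of
the augmented power balance satisfies `ρ̃⁽²⁾ ≤ ρ̃⁽¹⁾`. -/

lemma sat_mono {a a' x x' b b' : ℝ} (ha : a ≤ a') (hx : x ≤ x') (hb : b ≤ b') :
    sat a x b ≤ sat a' x' b' :=
  max_le_max ha (min_le_min hx hb)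

theorem rho_tilde_antitone_in_storage_energy
    (T S R D : ℕ) (ρmin ρmax Ts : ℝ)
    (uT χT ptmin ptmax : Fin T → ℝ) (δ : Fin T → Bool)
    (uS χS psmin psmax xmin xmax : Fin S → ℝ)
    (uR χR prmin wr : Fin R → ℝ) (wd : Fin D → ℝ)
    (hρ : ρmin ≤ ρmax) (hTs : 0 < Ts)
    (hχT : ∀ i, 0 ≤ χT i) (hχS : ∀ i, 0 ≤ χS i) (hχR : ∀ i, 0 ≤ χR i)
    (x₁ x₂ : Fin S → ℝ) (hx : x₁ ≤ x₂)
    (ρstar₁ ρstar₂ : ℝ)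
    (h₁ : IsGreatest {ρ : ℝ |
      ptot T S R D ρmin ρmax Ts uT χT ptmin ptmax δ uS χS psmin psmax xmin xmax
        uR χR prmin wr wd x₁ ρ = 0} ρstar₁)
    (h₂ : IsGreatest {ρ : ℝ |
      ptot T S R D ρmin ρmax Ts uT χT ptmin ptmax δ uS χS psmin psmax xmin xmax
        uR χR prmin wr wd x₂ ρ = 0} ρstar₂) :
    ρstar₂ ≤ ρstar₁ := by
  rcases le_or_gt ρstar₂ ρstar₁ with h | h
  · exact h
  · set f₁ := fun ρ => ptot T S R D ρmin ρmax Ts uT χT ptmin ptmax δ uS χS psmin psmax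
      xmin xmax uR χR prmin wr wd x₁ ρ with hf₁
    have key1 : ∀ ρ, f₁ ρ ≤ ptot T S R D ρmin ρmax Ts uT χT ptmin ptmax δ uS χS psmin psmax
        xmin xmax uR χR prmin wr wd x₂ ρ := by
      intro ρ
      simp only [hf₁, ptot, sat]
      gcongr <;> first | exact hTs | exact hx _
    have key2 : Monotone f₁ := by
      intro ρ ρ' hρρ
      simp only [hf₁, ptot, sat]
      gcongr with i hi i hi i hi
      · split_ifs
        · exact max_le_max le_rfl
            (min_le_min (add_le_add_right (mul_le_mul_of_nonneg_left hρρ (hχT i)) _) le_rfl)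
        · exact le_rfl
      · exact hχS i
      · exact hχR i
    have h0 : f₁ ρstar₂ = 0 := by
      have hle : f₁ ρstar₂ ≤ 0 := (key1 ρstar₂).trans_eq h₂.1
      have hge : (0 : ℝ) ≤ f₁ ρstar₂ := h₁.1 ▸ key2 h.le
      linarith
    exact h₁.2 h0
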